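/- arXiv:1508.04096 — 6 statements merged into one kernel-verified Lean document; each statement's English description precedes it below -/
import Mathlib

section
/- Let M₀ be a symmetric positive definite n×n real matrix, let Z₀ be a symmetric positive definite matrix with Z₀ ≈_ε M₀⁻¹ for some ε ≥ 0, let b₀ ∈ ℝⁿ, let x* = M₀⁻¹ b₀, and set x̃ = Z₀ b₀. Then ‖x* − x̃‖_{M₀} ≤ √(2 e^ε (e^ε − 1)) · ‖x*‖_{M₀}. -/
open Matrix

/-- Loewner order: `X ⪯ Y` iff `Y - X` is positive semidefinite. -/
def LoewnerLE {k : Type*} [Fintype k] (X Y : Matrix k k ℝ) : Prop := (Y - X).PosSemidef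

/-- `X ≈_α Y` iff `e^{-α} X ⪯ Y ⪯ e^{α} X` in the Loewner order. -/
def MApprox {k : Type*} [Fintype k] (α : ℝ) (X Y : Matrix k k ℝ) : Prop :=
  LoewnerLE (Real.exp (-α) • X) Y ∧ LoewnerLE Y (Real.exp α • X)


/-- The `M`-norm `‖u‖_M = √(uᵀ M u)`. -/
noncomputable def mnorm {n : ℕ} (M : Matrix (Fin n) (Fin n) ℝ) (u : Fin n → ℝ) : ℝ :=
  Real.sqrt (u ⬝ᵥ M.mulVec u)

variable {n : ℕ}

lemma psd_of_forall {A : Matrix (Fin n) (Fin n) ℝ} (hA : A.IsHermitian)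
    (h : ∀ x, 0 ≤ x ⬝ᵥ A *ᵥ x) : A.PosSemidef :=
  Matrix.PosSemidef.of_dotProduct_mulVec_nonneg hA fun x => by simpa using h x

lemma psd_smul {A : Matrix (Fin n) (Fin n) ℝ} (hA : A.PosSemidef) {c : ℝ} (hc : 0 ≤ c) :
    (c • A).PosSemidef := by
  refine Matrix.PosSemidef.of_dotProduct_mulVec_nonneg ?_ fun x => ?_
  · unfold Matrix.IsHermitian
    rw [conjTranspose_smul, hA.1]
    simp
  · have := hA.dotProduct_mulVec_nonneg x
    simp only [star_trivial, smul_mulVec, dotProduct_smul, smul_eq_mul] at *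
    positivity

lemma psd_cs {A : Matrix (Fin n) (Fin n) ℝ} (hA : A.PosSemidef) (u v : Fin n → ℝ) :
    (u ⬝ᵥ A *ᵥ v) ^ 2 ≤ (u ⬝ᵥ A *ᵥ u) * (v ⬝ᵥ A *ᵥ v) := by
  have hAt : Aᵀ = A := by
    have := hA.1
    simpa [Matrix.IsHermitian] using this
  have hsymm : ∀ a b : Fin n → ℝ, a ⬝ᵥ A *ᵥ b = b ⬝ᵥ A *ᵥ a := by
    intro a b
    calc a ⬝ᵥ A *ᵥ b = (A *ᵥ b) ⬝ᵥ a := dotProduct_comm _ _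
    _ = (b ᵥ* A) ⬝ᵥ a := by rw [← hAt, mulVec_transpose, hAt]
    _ = b ⬝ᵥ A *ᵥ a := by rw [← dotProduct_mulVec]
  have key : ∀ t : ℝ, 0 ≤ (v ⬝ᵥ A *ᵥ v) * (t * t) + (2 * (u ⬝ᵥ A *ᵥ v)) * t + (u ⬝ᵥ A *ᵥ u) := by
    intro t
    have h0 := hA.dotProduct_mulVec_nonneg (u + t • v)
    simp only [star_trivial, mulVec_add, mulVec_smul, dotProduct_add, add_dotProduct,
      dotProduct_smul, smul_dotProduct, smul_eq_mul] at h0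
    rw [hsymm v u] at h0
    ring_nf at h0 ⊢
    linarith
  have hd := discrim_le_zero key
  unfold discrim at hd
  nlinarith [hd]

lemma inv_antitone {X Y : Matrix (Fin n) (Fin n) ℝ} (hX : X.PosDef) (hY : Y.PosDef)
    (hle : (Y - X).PosSemidef) : (X⁻¹ - Y⁻¹).PosSemidef := by
  have hdX : IsUnit X.det := hX.det_pos.ne'.isUnit
  have hdY : IsUnit Y.det := hY.det_pos.ne'.isUnit
  refine psd_of_forall ((hX.inv.isHermitian).sub (hY.inv.isHermitian)) fun v => ?_
  set w : Fin n → ℝ := Y⁻¹ *ᵥ v with hw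
  have hYw : Y *ᵥ w = v := by
    rw [hw, mulVec_mulVec, mul_nonsing_inv _ hdY, one_mulVec]
  have hXv : X *ᵥ (X⁻¹ *ᵥ v) = v := by
    rw [mulVec_mulVec, mul_nonsing_inv _ hdX, one_mulVec]
  set s : ℝ := v ⬝ᵥ Y⁻¹ *ᵥ v with hsdef
  set q : ℝ := v ⬝ᵥ X⁻¹ *ᵥ v with hqdef
  have hs0 : 0 ≤ s := by simpa using hY.inv.posSemidef.dotProduct_mulVec_nonneg v
  have hq0 : 0 ≤ q := by simpa using hX.inv.posSemidef.dotProduct_mulVec_nonneg v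
  have hws : w ⬝ᵥ v = s := by rw [hsdef, ← hw, dotProduct_comm]
  have hwXw0 : 0 ≤ w ⬝ᵥ X *ᵥ w := by simpa using hX.posSemidef.dotProduct_mulVec_nonneg w
  have hwXw_le : w ⬝ᵥ X *ᵥ w ≤ s := by
    have h0 := hle.dotProduct_mulVec_nonneg w
    simp only [star_trivial, sub_mulVec, dotProduct_sub] at h0
    have : w ⬝ᵥ Y *ᵥ w = s := by rw [hYw, hws]
    linarith
  have hcs := psd_cs hX.posSemidef w (X⁻¹ *ᵥ v)
  rw [mulVec_mulVec, mul_nonsing_inv _ hdX, one_mulVec] at hcs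
  have h1 : w ⬝ᵥ v = s := hws
  have h2 : (X⁻¹ *ᵥ v) ⬝ᵥ v = q := by rw [hqdef, dotProduct_comm]
  rw [h1, h2] at hcs
  -- hcs : s ^ 2 ≤ (w ⬝ᵥ X *ᵥ w) * q
  have hsq : s ^ 2 ≤ s * q := le_trans hcs (mul_le_mul_of_nonneg_right hwXw_le hq0)
  have hsle : s ≤ q := by
    rcases eq_or_lt_of_le hs0 with h | h
    · rw [← h]; exact hq0
    · nlinarith
  have : v ⬝ᵥ (X⁻¹ - Y⁻¹) *ᵥ v = q - s := by
    simp only [sub_mulVec, dotProduct_sub, hsdef, hqdef]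
  linarith [this.ge, this.le, hsle]

lemma symm_shift {S : Matrix (Fin n) (Fin n) ℝ} (hS : Sᵀ = S) (a w : Fin n → ℝ) :
    (S *ᵥ a) ⬝ᵥ w = a ⬝ᵥ (S *ᵥ w) := by
  rw [dotProduct_comm, dotProduct_mulVec, ← mulVec_transpose, hS]
  exact dotProduct_comm _ _

/-- If `Z₀ ≈_ε M₀⁻¹` and `x̃ = Z₀ b₀`, then `x̃` is a `√(2 e^ε (e^ε − 1))`-approximate
solution of `M₀ x = b₀`, where `x* = M₀⁻¹ b₀`. -/
theorem approx_inverse_gives_approx_solution {n : ℕ}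
    {M₀ Z₀ : Matrix (Fin n) (Fin n) ℝ}
    (hM₀symm : M₀.IsSymm) (hZ₀symm : Z₀.IsSymm)
    (hM₀ : M₀.PosDef) (hZ₀ : Z₀.PosDef)
    {ε : ℝ} (hε : 0 ≤ ε) (h : MApprox ε Z₀ M₀⁻¹) (b₀ : Fin n → ℝ) :
    mnorm M₀ (M₀⁻¹.mulVec b₀ - Z₀.mulVec b₀)
      ≤ Real.sqrt (2 * Real.exp ε * (Real.exp ε - 1)) * mnorm M₀ (M₀⁻¹.mulVec b₀) := by
  set t : ℝ := Real.exp ε with htdef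
  have ht0 : 0 < t := Real.exp_pos ε
  have ht1 : 1 ≤ t := by
    rw [htdef, show (1:ℝ) = Real.exp 0 by simp]
    exact Real.exp_le_exp.mpr hε
  have htinv : Real.exp (-ε) = t⁻¹ := Real.exp_neg ε
  set W : Matrix (Fin n) (Fin n) ℝ := M₀⁻¹ with hWdef
  set c : ℝ := 2 * t * (t - 1) with hcdef
  have hc0 : 0 ≤ c := by nlinarith
  have hdM : IsUnit M₀.det := hM₀.det_pos.ne'.isUnit
  have hdZ : IsUnit Z₀.det := hZ₀.det_pos.ne'.isUnit
  have hWpd : W.PosDef := hM₀.inv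
  have e1 : W * M₀ = 1 := nonsing_inv_mul _ hdM
  have e2 : M₀ * W = 1 := mul_nonsing_inv _ hdM
  have h1 : (W - t⁻¹ • Z₀).PosSemidef := by
    have := h.1
    rw [LoewnerLE, htinv] at this
    exact this
  have h2 : (t • Z₀ - W).PosSemidef := h.2
  -- B : Z₀ - t⁻¹ • W is PSD
  have hB : (Z₀ - t⁻¹ • W).PosSemidef := by
    have := psd_smul h2 (inv_nonneg.mpr ht0.le)
    rwa [smul_sub, smul_smul, inv_mul_cancel₀ ht0.ne', one_smul] at this
  -- t • W - Z₀ is PSD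
  have hYX : (t • W - Z₀).PosSemidef := by
    have := psd_smul h1 ht0.le
    rwa [smul_sub, smul_smul, mul_inv_cancel₀ ht0.ne', one_smul] at this
  -- t • W is PosDef
  have hYpd : (t • W).PosDef := by
    refine Matrix.PosDef.of_dotProduct_mulVec_pos ?_ fun x hx => ?_
    · unfold Matrix.IsHermitian
      rw [conjTranspose_smul, hWpd.isHermitian]
      simp
    · have := hWpd.dotProduct_mulVec_pos hx
      simp only [star_trivial, smul_mulVec, dotProduct_smul, smul_eq_mul, RCLike.re_to_real] at *
      positivity
  -- inverse antitone: Z₀⁻¹ - t⁻¹ • M₀ is PSD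
  have hanti : (Z₀⁻¹ - t⁻¹ • M₀).PosSemidef := by
    have := inv_antitone hZ₀ hYpd hYX
    have hts : (t • W)⁻¹ = t⁻¹ • M₀ := by
      apply Matrix.inv_eq_left_inv
      rw [Matrix.smul_mul, Matrix.mul_smul, smul_smul, inv_mul_cancel₀ ht0.ne',
        one_smul, hWdef, mul_nonsing_inv _ hdM]
    rwa [hts] at this
  -- A : Z₀ * (t • Z₀⁻¹ - M₀) * Z₀ is PSD
  have hApsd : (Z₀ * (t • Z₀⁻¹ - M₀) * Z₀).PosSemidef := by
    have hinner : (t • Z₀⁻¹ - M₀).PosSemidef := by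
      have := psd_smul hanti ht0.le
      rwa [smul_sub, smul_smul, mul_inv_cancel₀ ht0.ne', one_smul] at this
    have := hinner.mul_mul_conjTranspose_same Z₀
    rwa [hZ₀.isHermitian.eq] at this
  have hCpsd : ((t - 1) • (t • W - Z₀)).PosSemidef := psd_smul hYX (by linarith)
  have hdcoef : 0 ≤ c - 1 + t⁻¹ - t * (t - 1) := by
    have htt : t * t⁻¹ = 1 := mul_inv_cancel₀ ht0.ne'
    rw [hcdef]
    nlinarith [sq_nonneg (t - 1), mul_pos ht0 ht0]
  have hDpsd : ((c - 1 + t⁻¹ - t * (t - 1)) • W).PosSemidef := psd_smul hWpd.posSemidef hdcoef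
  -- sum
  have hsum : ((Z₀ * (t • Z₀⁻¹ - M₀) * Z₀) + (Z₀ - t⁻¹ • W) + ((t - 1) • (t • W - Z₀))
      + ((c - 1 + t⁻¹ - t * (t - 1)) • W)).PosSemidef :=
    ((hApsd.add hB).add hCpsd).add hDpsd
  -- identity
  have hid : c • W - (W - Z₀) * M₀ * (W - Z₀)
      = (Z₀ * (t • Z₀⁻¹ - M₀) * Z₀) + (Z₀ - t⁻¹ • W) + ((t - 1) • (t • W - Z₀))
      + ((c - 1 + t⁻¹ - t * (t - 1)) • W) := by
    have q1 : (W - Z₀) * M₀ * (W - Z₀) = W - Z₀ - Z₀ + Z₀ * M₀ * Z₀ := by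
      have hww : W * M₀ * W = W := by rw [e1, Matrix.one_mul]
      have hwz : W * M₀ * Z₀ = Z₀ := by rw [e1, Matrix.one_mul]
      have hzw : Z₀ * M₀ * W = Z₀ := by rw [Matrix.mul_assoc, e2, Matrix.mul_one]
      rw [Matrix.sub_mul W Z₀ M₀, Matrix.sub_mul, Matrix.mul_sub, Matrix.mul_sub,
        hww, hwz, hzw]
      abel
    have q2 : Z₀ * (t • Z₀⁻¹ - M₀) * Z₀ = t • Z₀ - Z₀ * M₀ * Z₀ := by
      rw [Matrix.mul_sub, Matrix.sub_mul, Matrix.mul_smul, Matrix.smul_mul,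
        Matrix.mul_assoc Z₀ Z₀⁻¹, nonsing_inv_mul _ hdZ, Matrix.mul_one]
    rw [q1, q2]
    match_scalars <;> field_simp <;> ring
  -- evaluate at b₀
  have hpsdT : (c • W - (W - Z₀) * M₀ * (W - Z₀)).PosSemidef := hid ▸ hsum
  have hval := hpsdT.dotProduct_mulVec_nonneg b₀
  simp only [star_trivial, sub_mulVec, dotProduct_sub, smul_mulVec,
    dotProduct_smul, smul_eq_mul] at hval
  -- rewrite quadratic forms
  have hWt : Wᵀ = W := by
    rw [hWdef, transpose_nonsing_inv, hM₀symm.eq]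
  have hZt : Z₀ᵀ = Z₀ := hZ₀symm.eq
  have hsub : (W - Z₀)ᵀ = W - Z₀ := by rw [transpose_sub, hWt, hZt]
  have key1 : (W *ᵥ b₀ - Z₀ *ᵥ b₀) ⬝ᵥ M₀ *ᵥ (W *ᵥ b₀ - Z₀ *ᵥ b₀)
      = b₀ ⬝ᵥ ((W - Z₀) * M₀ * (W - Z₀)) *ᵥ b₀ := by
    rw [← sub_mulVec]
    calc ((W - Z₀) *ᵥ b₀) ⬝ᵥ M₀ *ᵥ ((W - Z₀) *ᵥ b₀)
        = ((W - Z₀) *ᵥ b₀) ⬝ᵥ ((M₀ * (W - Z₀)) *ᵥ b₀) := by rw [mulVec_mulVec]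
      _ = b₀ ⬝ᵥ ((W - Z₀) *ᵥ ((M₀ * (W - Z₀)) *ᵥ b₀)) := symm_shift hsub _ _
      _ = b₀ ⬝ᵥ (((W - Z₀) * (M₀ * (W - Z₀))) *ᵥ b₀) := by rw [mulVec_mulVec]
      _ = b₀ ⬝ᵥ ((W - Z₀) * M₀ * (W - Z₀)) *ᵥ b₀ := by rw [Matrix.mul_assoc]
  have key2 : (W *ᵥ b₀) ⬝ᵥ M₀ *ᵥ (W *ᵥ b₀) = b₀ ⬝ᵥ W *ᵥ b₀ := by
    rw [mulVec_mulVec, e2, one_mulVec]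
    exact dotProduct_comm _ _
  -- final numeric step
  have hq0 : 0 ≤ (W *ᵥ b₀ - Z₀ *ᵥ b₀) ⬝ᵥ M₀ *ᵥ (W *ᵥ b₀ - Z₀ *ᵥ b₀) := by
    simpa using hM₀.posSemidef.dotProduct_mulVec_nonneg (W *ᵥ b₀ - Z₀ *ᵥ b₀)
  have hmain : (W *ᵥ b₀ - Z₀ *ᵥ b₀) ⬝ᵥ M₀ *ᵥ (W *ᵥ b₀ - Z₀ *ᵥ b₀)
      ≤ c * ((W *ᵥ b₀) ⬝ᵥ M₀ *ᵥ (W *ᵥ b₀)) := by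
    rw [key1, key2]
    linarith [hval]
  rw [mnorm, mnorm]
  rw [show Real.sqrt (2 * Real.exp ε * (Real.exp ε - 1)) = Real.sqrt c by rw [hcdef, htdef]]
  rw [← Real.sqrt_mul hc0]
  exact Real.sqrt_le_sqrt hmain
end

section
/- Let M = D − A be an SDDM matrix, where D is a positive diagonal matrix and A is a nonnegative symmetric matrix. Then D − A D⁻¹ A is also an SDDM matrix. -/
open Matrix

/-- An `n × n` real symmetric matrix is SDDM if it is positive definite, has nonpositive
off-diagonal entries, and is diagonally dominant: `M i i ≥ ∑_{j ≠ i} |M i j|`. -/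
def IsSDDM {n : ℕ} (M : Matrix (Fin n) (Fin n) ℝ) : Prop :=
  M.PosDef ∧ (∀ i j, i ≠ j → M i j ≤ 0) ∧
    ∀ i, ∑ j ∈ Finset.univ.erase i, |M i j| ≤ M i i

/-- symmetry of the bilinear form of a symmetric matrix -/
lemma symm_dot {n : ℕ} {M : Matrix (Fin n) (Fin n) ℝ} (hM : Mᵀ = M) (u v : Fin n → ℝ) :
    u ⬝ᵥ (M *ᵥ v) = v ⬝ᵥ (M *ᵥ u) := by
  simp only [dotProduct, mulVec, Finset.mul_sum]
  rw [Finset.sum_comm]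
  refine Finset.sum_congr rfl fun i _ => Finset.sum_congr rfl fun j _ => ?_
  have h := congrFun (congrFun hM i) j
  rw [transpose_apply] at h
  rw [← h]; ring

/-- the key splitting identity for the quadratic form -/
lemma quad_split {n : ℕ} (D A : Matrix (Fin n) (Fin n) ℝ) (hD : Dᵀ = D) (hA : Aᵀ = A)
    (x y : Fin n → ℝ) (hy : D *ᵥ y = A *ᵥ x) :
    x ⬝ᵥ (D *ᵥ x) - x ⬝ᵥ (A *ᵥ y) =
      (1/2) * ((x - y) ⬝ᵥ ((D + A) *ᵥ (x - y))) +
        (1/2) * ((x + y) ⬝ᵥ ((D - A) *ᵥ (x + y))) := by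
  have h3 : y ⬝ᵥ (D *ᵥ y) = x ⬝ᵥ (A *ᵥ y) := by
    rw [hy, symm_dot hA]
  have h4 : y ⬝ᵥ (A *ᵥ x) = x ⬝ᵥ (A *ᵥ y) := symm_dot hA y x
  have h1 : y ⬝ᵥ (D *ᵥ x) = x ⬝ᵥ (A *ᵥ x) := by
    rw [symm_dot hD, hy]
  have h2 : x ⬝ᵥ (D *ᵥ y) = x ⬝ᵥ (A *ᵥ x) := by rw [hy]
  simp only [add_mulVec, sub_mulVec, mulVec_add, mulVec_sub, dotProduct_add, dotProduct_sub,
    add_dotProduct, sub_dotProduct]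
  linear_combination h4 - h3

/-- If `M = D − A` is SDDM with `D` positive diagonal and `A` nonnegative symmetric,
then `D − A D⁻¹ A` is also SDDM. -/
theorem sddm_of_sddm_splitting {n : ℕ} (d : Fin n → ℝ) (hd : ∀ i, 0 < d i)
    (A : Matrix (Fin n) (Fin n) ℝ) (hA : A.IsSymm) (hA0 : ∀ i j, 0 ≤ A i j)
    (hM : IsSDDM (Matrix.diagonal d - A)) :
    IsSDDM (Matrix.diagonal d - A * (Matrix.diagonal d)⁻¹ * A) := by
  obtain ⟨hPD, hoff, hdom⟩ := hM
  set e : Fin n → ℝ := fun i => (d i)⁻¹ with he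
  have he0 : ∀ i, 0 ≤ e i := fun i => le_of_lt (inv_pos.mpr (hd i))
  have hDinv : (Matrix.diagonal d)⁻¹ = Matrix.diagonal e := by
    apply inv_eq_right_inv
    rw [diagonal_mul_diagonal]
    convert diagonal_one with i
    exact mul_inv_cancel₀ (hd i).ne'
  rw [hDinv]
  have hAsymm : Aᵀ = A := hA
  have hAsym : ∀ i j, A j i = A i j := by
    intro i j
    have h := congrFun (congrFun hAsymm i) j
    rwa [transpose_apply] at h
  -- entries of P = A * diagonal e * A
  have hP : ∀ i j, (A * Matrix.diagonal e * A) i j = ∑ k, A i k * e k * A k j := by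
    intro i j
    rw [Matrix.mul_apply]
    refine Finset.sum_congr rfl fun k _ => ?_
    rw [Matrix.mul_diagonal]
  have hP0 : ∀ i j, 0 ≤ (A * Matrix.diagonal e * A) i j := by
    intro i j
    rw [hP]
    exact Finset.sum_nonneg fun k _ =>
      mul_nonneg (mul_nonneg (hA0 i k) (he0 k)) (hA0 k j)
  -- row sums of A are at most d
  have hr : ∀ k, ∑ j, A k j ≤ d k := by
    intro k
    have h := hdom k
    have h1 : ∀ j ∈ Finset.univ.erase k, |(Matrix.diagonal d - A) k j| = A k j := by
      intro j hj
      have hjk : j ≠ k := Finset.ne_of_mem_erase hj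
      rw [Matrix.sub_apply, Matrix.diagonal_apply_ne' d hjk, zero_sub, abs_neg,
        abs_of_nonneg (hA0 k j)]
    rw [Finset.sum_congr rfl h1] at h
    rw [Matrix.sub_apply, Matrix.diagonal_apply_eq] at h
    have := Finset.sum_erase_add Finset.univ (fun j => A k j) (Finset.mem_univ k)
    linarith [this]
  -- row sums of P are at most d
  have hrowP : ∀ i, ∑ j, (A * Matrix.diagonal e * A) i j ≤ d i := by
    intro i
    calc ∑ j, (A * Matrix.diagonal e * A) i j
        = ∑ k, A i k * e k * (∑ j, A k j) := by
          simp only [hP, Finset.mul_sum]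
          rw [Finset.sum_comm]
      _ ≤ ∑ k, A i k := by
          refine Finset.sum_le_sum fun k _ => ?_
          have h1 : A i k * e k * (∑ j, A k j) ≤ A i k * e k * d k :=
            mul_le_mul_of_nonneg_left (hr k) (mul_nonneg (hA0 i k) (he0 k))
          have h2 : A i k * e k * d k = A i k := by
            show A i k * (d k)⁻¹ * d k = A i k
            rw [mul_assoc, inv_mul_cancel₀ (hd k).ne', mul_one]
          linarith
      _ ≤ d i := hr i
  -- nonneg quadratic form of D + A via absolute values
  have habs : ∀ w : Fin n → ℝ,
      (fun i => |w i|) ⬝ᵥ ((Matrix.diagonal d - A) *ᵥ fun i => |w i|) ≤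
        w ⬝ᵥ ((Matrix.diagonal d + A) *ᵥ w) := by
    intro w
    simp only [sub_mulVec, add_mulVec, dotProduct_sub, dotProduct_add]
    have hDeq : (fun i => |w i|) ⬝ᵥ (Matrix.diagonal d *ᵥ fun i => |w i|) =
        w ⬝ᵥ (Matrix.diagonal d *ᵥ w) := by
      simp only [dotProduct, mulVec_diagonal]
      refine Finset.sum_congr rfl fun i _ => ?_
      rw [mul_left_comm, mul_left_comm (w i)]
      congr 1
      exact abs_mul_abs_self _
    have hAineq : -((fun i => |w i|) ⬝ᵥ (A *ᵥ fun i => |w i|)) ≤ w ⬝ᵥ (A *ᵥ w) := by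
      simp only [dotProduct, mulVec, Finset.mul_sum]
      rw [← Finset.sum_neg_distrib]
      refine Finset.sum_le_sum fun i _ => ?_
      rw [← Finset.sum_neg_distrib]
      refine Finset.sum_le_sum fun j _ => ?_
      have h1 : |w i * (A i j * w j)| = |w i| * (A i j * |w j|) := by
        rw [abs_mul, abs_mul, abs_of_nonneg (hA0 i j)]
      calc -(|w i| * (A i j * |w j|)) = -|w i * (A i j * w j)| := by rw [h1]
        _ ≤ w i * (A i j * w j) := neg_abs_le _
    linarith
  have hDmA_pos : ∀ w : Fin n → ℝ, w ≠ 0 → 0 < w ⬝ᵥ ((Matrix.diagonal d - A) *ᵥ w) := by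
    intro w hw
    have := hPD.dotProduct_mulVec_pos hw
    simpa using this
  have hDmA_nonneg : ∀ w : Fin n → ℝ, 0 ≤ w ⬝ᵥ ((Matrix.diagonal d - A) *ᵥ w) := by
    intro w
    have := hPD.posSemidef.dotProduct_mulVec_nonneg w
    simpa using this
  have hDpA_nonneg : ∀ w : Fin n → ℝ, 0 ≤ w ⬝ᵥ ((Matrix.diagonal d + A) *ᵥ w) := by
    intro w
    exact le_trans (hDmA_nonneg fun i => |w i|) (habs w)
  have hDpA_pos : ∀ w : Fin n → ℝ, w ≠ 0 → 0 < w ⬝ᵥ ((Matrix.diagonal d + A) *ᵥ w) := by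
    intro w hw
    have hz : (fun i => |w i|) ≠ 0 := by
      intro hcon
      apply hw
      funext i
      have := congrFun hcon i
      simpa [abs_eq_zero] using this
    exact lt_of_lt_of_le (hDmA_pos _ hz) (habs w)
  refine ⟨posDef_iff_dotProduct_mulVec.mpr ⟨?_, ?_⟩, ?_, ?_⟩
  · -- Hermitian
    apply Matrix.IsHermitian.ext
    intro i j
    simp only [star_trivial, Matrix.sub_apply, hP, Matrix.diagonal_apply]
    have hd' : (if j = i then d j else 0) = (if i = j then d i else 0) := by
      by_cases h : i = j
      · subst h; simp
      · rw [if_neg (fun hc => h hc.symm), if_neg h]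
    rw [hd']
    congr 1
    refine Finset.sum_congr rfl fun k _ => ?_
    rw [hAsym k j, hAsym i k]
    ring
  · -- positivity
    intro x hx
    simp only [star_trivial]
    have hde : Matrix.diagonal d * Matrix.diagonal e = 1 := by
      rw [diagonal_mul_diagonal]
      convert diagonal_one with i
      exact mul_inv_cancel₀ (hd i).ne'
    obtain ⟨y, hy_def⟩ : ∃ y : Fin n → ℝ, y = Matrix.diagonal e *ᵥ (A *ᵥ x) := ⟨_, rfl⟩
    have hy : Matrix.diagonal d *ᵥ y = A *ᵥ x := by
      rw [hy_def, mulVec_mulVec, hde, one_mulVec]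
    have hAy : (A * Matrix.diagonal e * A) *ᵥ x = A *ᵥ y := by
      rw [hy_def]
      simp only [mulVec_mulVec]
      rw [mul_assoc]
    have hDt : (Matrix.diagonal d)ᵀ = Matrix.diagonal d := diagonal_transpose d
    have key := quad_split (Matrix.diagonal d) A hDt hAsymm x y hy
    have hsplit : x ⬝ᵥ ((Matrix.diagonal d - A * Matrix.diagonal e * A) *ᵥ x) =
        (1/2) * ((x - y) ⬝ᵥ ((Matrix.diagonal d + A) *ᵥ (x - y))) +
          (1/2) * ((x + y) ⬝ᵥ ((Matrix.diagonal d - A) *ᵥ (x + y))) := by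
      rw [sub_mulVec, dotProduct_sub, hAy, key]
    rw [hsplit]
    by_cases hxy : x + y = 0
    · have hxy2 : x - y ≠ 0 := by
        intro hcon
        apply hx
        funext i
        have e1 := congrFun hxy i
        have e2 := congrFun hcon i
        simp only [Pi.add_apply, Pi.sub_apply, Pi.zero_apply] at e1 e2 ⊢
        linarith
      have h1 := hDpA_pos _ hxy2
      have h2 := hDmA_nonneg (x + y)
      linarith
    · have h1 := hDmA_pos _ hxy
      have h2 := hDpA_nonneg (x - y)
      linarith
  · -- off-diagonal nonpositive
    intro i j hij
    rw [Matrix.sub_apply, Matrix.diagonal_apply_ne d hij]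
    have := hP0 i j
    linarith
  · -- diagonal dominance
    intro i
    have h1 : ∀ j ∈ Finset.univ.erase i,
        |(Matrix.diagonal d - A * Matrix.diagonal e * A) i j| =
          (A * Matrix.diagonal e * A) i j := by
      intro j hj
      have hji : j ≠ i := Finset.ne_of_mem_erase hj
      rw [Matrix.sub_apply, Matrix.diagonal_apply_ne' d hji, zero_sub, abs_neg,
        abs_of_nonneg (hP0 i j)]
    rw [Finset.sum_congr rfl h1, Matrix.sub_apply, Matrix.diagonal_apply_eq]
    have h2 := Finset.sum_erase_add Finset.univ
      (fun j => (A * Matrix.diagonal e * A) i j) (Finset.mem_univ i)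
    have h3 := hrowP i
    have h4 := hP0 i i
    linarith
end

section
/- Let M = D − A be an SDDM matrix, where D is a positive diagonal matrix and A is a nonnegative symmetric matrix. Then D − A D⁻¹ A is invertible and (D − A)⁻¹ = (1/2)·[D⁻¹ + (I + D⁻¹A)(D − A D⁻¹ A)⁻¹(I + A D⁻¹)]. -/
open Matrix

/-- If `M = D − A` is SDDM with `D` positive diagonal and `A` nonnegative symmetric, then
`D − A D⁻¹ A` is invertible and
`(D − A)⁻¹ = (1/2) [D⁻¹ + (I + D⁻¹ A)(D − A D⁻¹ A)⁻¹(I + A D⁻¹)]`. -/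
theorem inv_of_sddm_splitting {n : ℕ} (d : Fin n → ℝ) (hd : ∀ i, 0 < d i)
    (A : Matrix (Fin n) (Fin n) ℝ) (hA : A.IsSymm) (hA0 : ∀ i j, 0 ≤ A i j)
    (hM : IsSDDM (Matrix.diagonal d - A)) :
    IsUnit (Matrix.diagonal d - A * (Matrix.diagonal d)⁻¹ * A) ∧
    (Matrix.diagonal d - A)⁻¹ =
      (1 / 2 : ℝ) • ((Matrix.diagonal d)⁻¹ +
        (1 + (Matrix.diagonal d)⁻¹ * A) *
          (Matrix.diagonal d - A * (Matrix.diagonal d)⁻¹ * A)⁻¹ *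
            (1 + A * (Matrix.diagonal d)⁻¹)) := by
  set D := Matrix.diagonal d with hDdef
  have hMpd : (D - A).PosDef := hM.1
  have hdetD : IsUnit D.det := by
    rw [hDdef, Matrix.det_diagonal]
    exact isUnit_iff_ne_zero.mpr (Finset.prod_ne_zero_iff.mpr fun i _ => (hd i).ne')
  have hDD : D * D⁻¹ = 1 := Matrix.mul_nonsing_inv D hdetD
  have hDD' : D⁻¹ * D = 1 := Matrix.nonsing_inv_mul D hdetD
  -- D + A is positive definite
  have hDApd : (D + A).PosDef := by
    refine Matrix.PosDef.of_dotProduct_mulVec_pos ?_ ?_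
    · have h1 : (D - A).IsHermitian := hMpd.1
      have hDh : D.IsHermitian := Matrix.isHermitian_diagonal d
      have hAh : A.IsHermitian := by
        rw [Matrix.IsHermitian, Matrix.conjTranspose_eq_transpose_of_trivial, hA]
      exact hDh.add hAh
    · intro x hx
      have hy : (fun i => |x i|) ≠ 0 := by
        intro h
        apply hx
        funext i
        have := congrFun h i
        simpa [abs_eq_zero] using this
      have h1 := hMpd.dotProduct_mulVec_pos hy
      simp only [star_trivial] at h1 ⊢
      refine lt_of_lt_of_le h1 ?_
      simp only [dotProduct, Matrix.mulVec, dotProduct, Finset.mul_sum]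
      refine Finset.sum_le_sum fun i _ => Finset.sum_le_sum fun j _ => ?_
      have hda : (D - A) i j = D i j - A i j := rfl
      have hda2 : (D + A) i j = D i j + A i j := rfl
      rw [hda, hda2]
      have hDsym : D i j * (|x i| * |x j|) = D i j * (x i * x j) := by
        rcases eq_or_ne i j with h | h
        · subst h; simp [abs_mul_abs_self, hDdef, Matrix.diagonal]
        · simp [hDdef, Matrix.diagonal_apply_ne _ h]
      have habs : -(A i j * (|x i| * |x j|)) ≤ A i j * (x i * x j) := by
        have h1 : |x i| * |x j| = |x i * x j| := (abs_mul _ _).symm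
        rw [h1]
        have := neg_abs_le (x i * x j)
        nlinarith [hA0 i j, abs_nonneg (x i * x j)]
      nlinarith [hDsym, habs]
  have hdetM : IsUnit (D - A).det := isUnit_iff_ne_zero.mpr hMpd.det_pos.ne'
  have hdetDA : IsUnit (D + A).det := isUnit_iff_ne_zero.mpr hDApd.det_pos.ne'
  -- factorization of N
  have hN : D - A * D⁻¹ * A = (D - A) * (1 + D⁻¹ * A) := by
    have h1 : D * (D⁻¹ * A) = A := by rw [← mul_assoc, hDD, one_mul]
    have h2 : A * (D⁻¹ * A) = A * D⁻¹ * A := by rw [mul_assoc]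
    rw [mul_add, sub_mul, sub_mul, mul_one, mul_one, h1, h2]
    abel
  have hN2 : D - A * D⁻¹ * A = (D - A) * D⁻¹ * (D + A) := by
    rw [hN, mul_assoc]
    congr 1
    rw [mul_add, hDD']
  have hNunit : IsUnit (D - A * D⁻¹ * A) := by
    rw [hN2]
    apply (Matrix.isUnit_iff_isUnit_det _).mpr
    rw [Matrix.det_mul, Matrix.det_mul]
    exact (hdetM.mul (by rwa [Matrix.det_nonsing_inv, isUnit_ringInverse])).mul hdetDA
  refine ⟨hNunit, ?_⟩
  have hdetN : IsUnit (D - A * D⁻¹ * A).det := (Matrix.isUnit_iff_isUnit_det _).mp hNunit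
  have hNN : (D - A * D⁻¹ * A) * (D - A * D⁻¹ * A)⁻¹ = 1 :=
    Matrix.mul_nonsing_inv _ hdetN
  apply Matrix.inv_eq_right_inv
  have key : (D - A) * ((1 + D⁻¹ * A) * (D - A * D⁻¹ * A)⁻¹) = 1 := by
    rw [← mul_assoc, ← hN, hNN]
  calc (D - A) * ((1 / 2 : ℝ) • (D⁻¹ +
        (1 + D⁻¹ * A) * (D - A * D⁻¹ * A)⁻¹ * (1 + A * D⁻¹)))
      = (1 / 2 : ℝ) • ((D - A) * D⁻¹ +
        (D - A) * ((1 + D⁻¹ * A) * (D - A * D⁻¹ * A)⁻¹) * (1 + A * D⁻¹)) := by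
        rw [Matrix.mul_smul, mul_add, ← mul_assoc, mul_assoc (D - A)]
    _ = (1 / 2 : ℝ) • ((1 - A * D⁻¹) + (1 + A * D⁻¹)) := by
        rw [key, one_mul, sub_mul, hDD]
    _ = 1 := by
        have : (1 - A * D⁻¹) + (1 + A * D⁻¹) = (2 : ℝ) • (1 : Matrix (Fin n) (Fin n) ℝ) := by
          rw [two_smul]; abel
        rw [this, smul_smul]; norm_num
end

section
/- Let M₀ = D₀ − A₀ be the standard splitting of an SDDM matrix M₀ and let κ = λ_max(M₀)/λ_min(M₀) be its condition number. Then every eigenvalue λ of D₀⁻¹A₀ satisfies |λ| ≤ 1 − 1/κ. -/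
open Matrix

lemma quad_decomp {n : ℕ} {M : Matrix (Fin n) (Fin n) ℝ} (hM : M.IsHermitian) (x : Fin n → ℝ) :
    ∃ y : Fin n → ℝ, x ⬝ᵥ x = y ⬝ᵥ y ∧
      x ⬝ᵥ M *ᵥ x = ∑ i, hM.eigenvalues i * (y i)^2 := by
  set U : Matrix (Fin n) (Fin n) ℝ := ↑(hM.eigenvectorUnitary) with hU
  have hUU : U * star U = 1 := (Matrix.mem_unitaryGroup_iff).mp (hM.eigenvectorUnitary).2
  refine ⟨star U *ᵥ x, ?_, ?_⟩
  · calc x ⬝ᵥ x = x ⬝ᵥ ((U * star U) *ᵥ x) := by rw [hUU]; simp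
    _ = (star U *ᵥ x) ⬝ᵥ (star U *ᵥ x) := by
        rw [← mulVec_mulVec, dotProduct_mulVec, ← mulVec_transpose,
          ← conjTranspose_eq_transpose_of_trivial, ← star_eq_conjTranspose]
  · conv_lhs => rw [hM.spectral_theorem, Unitary.conjStarAlgAut_apply]
    rw [← mulVec_mulVec, ← mulVec_mulVec, dotProduct_mulVec, ← mulVec_transpose,
      ← conjTranspose_eq_transpose_of_trivial, ← star_eq_conjTranspose]
    simp [dotProduct, mulVec_diagonal, Finset.mul_sum, mul_comm, pow_two, mul_assoc]
    exact Finset.sum_congr rfl fun i _ => by ring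

/-- Standard splitting `M₀ = D₀ − A₀` of an SDDM matrix: every eigenvalue `λ` of `D₀⁻¹ A₀`
satisfies `|λ| ≤ 1 − 1/κ`, where `κ = λ_max(M₀)/λ_min(M₀)` is the condition number. -/
theorem eigenvalue_bound_of_standard_splitting {n : ℕ}
    {M : Matrix (Fin n) (Fin n) ℝ} (hM : IsSDDM M) (hHerm : M.IsHermitian)
    {lmax lmin κ : ℝ}
    (hmax : IsGreatest (Set.range hHerm.eigenvalues) lmax)
    (hmin : IsLeast (Set.range hHerm.eigenvalues) lmin)
    (hκ : κ = lmax / lmin) :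
    ∀ (μ : ℝ) (v : Fin n → ℝ), v ≠ 0 →
      ((Matrix.diagonal fun i => M i i)⁻¹ *
        (Matrix.diagonal (fun i => M i i) - M)).mulVec v = μ • v →
      |μ| ≤ 1 - 1 / κ := by
  obtain ⟨hPD, hoff, _hdom⟩ := hM
  intro μ v hv hev
  set d : Fin n → ℝ := fun i => M i i with hd
  -- eigenvalue range facts
  have hlminpos : 0 < lmin := by
    obtain ⟨i, hi⟩ := hmin.1
    rw [← hi]; exact hPD.eigenvalues_pos i
  have hble : ∀ i, lmin ≤ hHerm.eigenvalues i := fun i => hmin.2 ⟨i, rfl⟩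
  have hbge : ∀ i, hHerm.eigenvalues i ≤ lmax := fun i => hmax.2 ⟨i, rfl⟩
  have hlmaxpos : 0 < lmax := by
    obtain ⟨i, hi⟩ := hmin.1
    exact lt_of_lt_of_le hlminpos (hi ▸ hbge i)
  -- Rayleigh bounds
  have hray : ∀ x : Fin n → ℝ,
      lmin * (x ⬝ᵥ x) ≤ x ⬝ᵥ M *ᵥ x ∧ x ⬝ᵥ M *ᵥ x ≤ lmax * (x ⬝ᵥ x) := by
    intro x
    obtain ⟨y, hxy, hq⟩ := quad_decomp hHerm x
    have hyy : y ⬝ᵥ y = ∑ i, (y i)^2 := by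
      simp [dotProduct, pow_two]
    constructor
    · rw [hq, hxy, hyy, Finset.mul_sum]
      exact Finset.sum_le_sum fun i _ => by nlinarith [hble i, sq_nonneg (y i)]
    · rw [hq, hxy, hyy, Finset.mul_sum]
      exact Finset.sum_le_sum fun i _ => by nlinarith [hbge i, sq_nonneg (y i)]
  -- diagonal entries are between lmin and lmax
  have hdiag : ∀ i, lmin ≤ d i ∧ d i ≤ lmax := by
    intro i
    have h := hray (Pi.single i 1)
    have h1 : (Pi.single i 1 : Fin n → ℝ) ⬝ᵥ (Pi.single i 1) = 1 := by simp
    have h2 : (Pi.single i 1 : Fin n → ℝ) ⬝ᵥ M *ᵥ (Pi.single i 1) = d i := by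
      simp [mulVec_single, dotProduct, Pi.single_apply, hd]
    rw [h1, h2] at h
    simpa using h
  have hdpos : ∀ i, 0 < d i := fun i => lt_of_lt_of_le hlminpos (hdiag i).1
  -- eigen-equation manipulation
  have hdet : IsUnit (Matrix.diagonal d).det := by
    rw [det_diagonal]
    exact isUnit_iff_ne_zero.2 (Finset.prod_ne_zero_iff.2 fun i _ => ne_of_gt (hdpos i))
  have hDinv : Matrix.diagonal d * (Matrix.diagonal d)⁻¹ = 1 := mul_nonsing_inv _ hdet
  have heq : (Matrix.diagonal d - M) *ᵥ v = μ • (Matrix.diagonal d *ᵥ v) := by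
    have h := congrArg (fun w => Matrix.diagonal d *ᵥ w) hev
    simp only [mulVec_mulVec, ← Matrix.mul_assoc, hDinv, Matrix.one_mul, mulVec_smul] at h
    exact h
  set P : ℝ := v ⬝ᵥ (Matrix.diagonal d *ᵥ v) with hPdef
  set Q : ℝ := v ⬝ᵥ M *ᵥ v with hQdef
  set S : ℝ := v ⬝ᵥ v with hSdef
  have hPQ : P - Q = μ * P := by
    have h := congrArg (fun w => v ⬝ᵥ w) heq
    simpa [sub_mulVec, dotProduct_sub, dotProduct_smul, smul_eq_mul] using h
  have hP : P = ∑ i, d i * (v i)^2 := by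
    simp only [hPdef, dotProduct, mulVec_diagonal]
    exact Finset.sum_congr rfl fun i _ => by ring
  have hSsum : S = ∑ i, (v i)^2 := by
    simp [hSdef, dotProduct, pow_two]
  have hSpos : 0 < S := by
    obtain ⟨i, hi⟩ := Function.ne_iff.mp hv
    rw [hSsum]
    have : (0:ℝ) < (v i)^2 := by
      have h0 : 0 < |v i| := abs_pos.mpr hi
      nlinarith [abs_mul_abs_self (v i)]
    exact lt_of_lt_of_le this
      (Finset.single_le_sum (fun j _ => sq_nonneg (v j)) (Finset.mem_univ i))
  have hPlb : lmin * S ≤ P := by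
    rw [hP, hSsum, Finset.mul_sum]
    exact Finset.sum_le_sum fun i _ => by nlinarith [(hdiag i).1, sq_nonneg (v i)]
  have hPub : P ≤ lmax * S := by
    rw [hP, hSsum, Finset.mul_sum]
    exact Finset.sum_le_sum fun i _ => by nlinarith [(hdiag i).2, sq_nonneg (v i)]
  have hPpos : 0 < P := lt_of_lt_of_le (by positivity) hPlb
  have hQlb : lmin * S ≤ Q := (hray v).1
  -- key inequality: lmin * S ≤ 2P - Q, via the absolute-value vector
  have hkey : lmin * S ≤ 2 * P - Q := by
    set w : Fin n → ℝ := fun i => |v i| with hwdef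
    have hww : w ⬝ᵥ w = S := by
      simp only [hwdef, hSdef, dotProduct]
      exact Finset.sum_congr rfl fun i _ => abs_mul_abs_self (v i)
    have h1 : lmin * S ≤ w ⬝ᵥ M *ᵥ w := by
      have := (hray w).1; rwa [hww] at this
    refine le_trans h1 ?_
    have expand : ∀ u : Fin n → ℝ, u ⬝ᵥ M *ᵥ u = ∑ i, ∑ j, u i * M i j * u j := by
      intro u
      simp [dotProduct, mulVec, Finset.mul_sum, mul_assoc]
    have h2P : 2 * P = ∑ i, ∑ j, (if j = i then 2 * d i * (v i)^2 else 0) := by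
      rw [hP, Finset.mul_sum]
      refine Finset.sum_congr rfl fun i _ => ?_
      rw [Finset.sum_ite_eq' Finset.univ i (fun _ => 2 * d i * (v i)^2)]
      simp only [Finset.mem_univ, if_true]; ring
    have hQs : Q = ∑ i, ∑ j, v i * M i j * v j := expand v
    rw [expand w, h2P, hQs, ← Finset.sum_sub_distrib]
    refine Finset.sum_le_sum fun i _ => ?_
    rw [← Finset.sum_sub_distrib]
    refine Finset.sum_le_sum fun j _ => ?_
    by_cases hij : j = i
    · subst hij
      simp only [if_pos rfl, if_true, hwdef, hd]
      have h3 : |v j| * M j j * |v j| = v j * M j j * v j := by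
        rw [mul_comm (|v j|) (M j j), mul_assoc, abs_mul_abs_self]; ring
      nlinarith [h3]
    · have hM0 : M i j ≤ 0 := hoff i j (fun h => hij h.symm)
      simp only [if_neg hij, hwdef]
      nlinarith [abs_nonneg (v i), abs_nonneg (v j), le_abs_self (v i * v j),
        neg_abs_le (v i * v j), abs_mul (v i) (v j)]
  -- conclude
  have hr1 : lmin / lmax * P ≤ lmin * S := by
    have := mul_le_mul_of_nonneg_left hPub (le_of_lt (div_pos hlminpos hlmaxpos))
    calc lmin / lmax * P ≤ lmin / lmax * (lmax * S) := this
      _ = lmin * S := by field_simp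
  have hgoal : 1 - 1 / κ = 1 - lmin / lmax := by
    rw [hκ, one_div_div]
  rw [hgoal]
  rw [abs_le]
  constructor
  · -- -(1 - lmin/lmax) ≤ μ
    rw [← mul_le_mul_iff_of_pos_right hPpos]
    calc -(1 - lmin / lmax) * P = lmin / lmax * P - P := by ring
      _ ≤ lmin * S - P := by linarith
      _ ≤ P - Q := by linarith
      _ = μ * P := hPQ
  · rw [← mul_le_mul_iff_of_pos_right hPpos]
    calc μ * P = P - Q := hPQ.symm
      _ ≤ P - lmin * S := by linarith
      _ ≤ P - lmin / lmax * P := by linarith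
      _ = (1 - lmin / lmax) * P := by ring
end

section
/- Let M₀ = D₀ − A₀ be the standard splitting of an SDDM matrix M₀ with condition number κ = λ_max(M₀)/λ_min(M₀), and let d = ⌈log₂(2 ln(2^{1/3}/(2^{1/3} − 1)) · κ)⌉. Then there exists ε_d with 0 ≤ ε_d < (1/3)·ln 2 such that e^{−ε_d} D₀ ⪯ D₀ − D₀(D₀⁻¹A₀)^{2^d} ⪯ e^{ε_d} D₀, i.e., D₀ ≈_{ε_d} D₀ − D₀(D₀⁻¹A₀)^{2^d}. -/
open Matrix

section Aux

variable {n : ℕ}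

private lemma conj_pow' {P Q X : Matrix (Fin n) (Fin n) ℝ} (hPQ : P * Q = 1)
    (hQP : Q * P = 1) (k : ℕ) (hk : k ≠ 0) :
    (P * X * Q) ^ k = P * X ^ k * Q := by
  have key : ∀ Y : Matrix (Fin n) (Fin n) ℝ, Q * (P * Y) = Y := fun Y => by
    rw [← mul_assoc, hQP, one_mul]
  induction k with
  | zero => omega
  | succ m ih =>
    rcases Nat.eq_zero_or_pos m with hm | hm
    · subst hm; simp
    · rw [pow_succ, ih (by omega), pow_succ]
      simp only [mul_assoc, key]

private lemma eig_le_of_psd' {B : Matrix (Fin n) (Fin n) ℝ} (hB : B.IsHermitian) {c : ℝ}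
    (h : (c • (1 : Matrix (Fin n) (Fin n) ℝ) - B).PosSemidef) (i : Fin n) :
    hB.eigenvalues i ≤ c := by
  set v : Fin n → ℝ := (WithLp.equiv 2 (Fin n → ℝ)) (hB.eigenvectorBasis i) with hvdef
  have h2 : (0:ℝ) ≤ star v ⬝ᵥ ((c • (1 : Matrix (Fin n) (Fin n) ℝ) - B) *ᵥ v) := h.dotProduct_mulVec_nonneg v
  have hv : B *ᵥ v = hB.eigenvalues i • v := hB.mulVec_eigenvectorBasis i
  have hnorm : star v ⬝ᵥ v = 1 := by
    have h1 : ‖hB.eigenvectorBasis i‖ = 1 := hB.eigenvectorBasis.orthonormal.1 i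
    have h3 := real_inner_self_eq_norm_sq (hB.eigenvectorBasis i)
    rw [EuclideanSpace.inner_eq_star_dotProduct, h1] at h3
    simpa [hvdef] using h3
  rw [sub_mulVec, dotProduct_sub, smul_mulVec, one_mulVec, dotProduct_smul,
    hnorm, hv, dotProduct_smul, hnorm] at h2
  simp at h2
  linarith

private lemma neg_le_eig_of_psd' {B : Matrix (Fin n) (Fin n) ℝ} (hB : B.IsHermitian) {c : ℝ}
    (h : (c • (1 : Matrix (Fin n) (Fin n) ℝ) + B).PosSemidef) (i : Fin n) :
    -c ≤ hB.eigenvalues i := by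
  set v : Fin n → ℝ := (WithLp.equiv 2 (Fin n → ℝ)) (hB.eigenvectorBasis i) with hvdef
  have h2 : (0:ℝ) ≤ star v ⬝ᵥ ((c • (1 : Matrix (Fin n) (Fin n) ℝ) + B) *ᵥ v) := h.dotProduct_mulVec_nonneg v
  have hv : B *ᵥ v = hB.eigenvalues i • v := hB.mulVec_eigenvectorBasis i
  have hnorm : star v ⬝ᵥ v = 1 := by
    have h1 : ‖hB.eigenvectorBasis i‖ = 1 := hB.eigenvectorBasis.orthonormal.1 i
    have h3 := real_inner_self_eq_norm_sq (hB.eigenvectorBasis i)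
    rw [EuclideanSpace.inner_eq_star_dotProduct, h1] at h3
    simpa [hvdef] using h3
  rw [add_mulVec, dotProduct_add, smul_mulVec, one_mulVec, dotProduct_smul,
    hnorm, hv, dotProduct_smul, hnorm] at h2
  simp at h2
  linarith

private lemma spectral_decomp' {B : Matrix (Fin n) (Fin n) ℝ} (hB : B.IsHermitian) (k : ℕ) :
    B ^ k = (hB.eigenvectorUnitary : Matrix (Fin n) (Fin n) ℝ) *
      diagonal (fun i => hB.eigenvalues i ^ k) *
      star (hB.eigenvectorUnitary : Matrix (Fin n) (Fin n) ℝ) := by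
  set U : Matrix (Fin n) (Fin n) ℝ := (hB.eigenvectorUnitary : Matrix (Fin n) (Fin n) ℝ)
  have hU : U * star U = 1 := (Matrix.mem_unitaryGroup_iff).mp hB.eigenvectorUnitary.2
  have hU' : star U * U = 1 := (Matrix.mem_unitaryGroup_iff').mp hB.eigenvectorUnitary.2
  have key : ∀ Y : Matrix (Fin n) (Fin n) ℝ, star U * (U * Y) = Y := fun Y => by
    rw [← mul_assoc, hU', one_mul]
  have hspec : B = U * diagonal hB.eigenvalues * star U := by
    simpa using hB.spectral_theorem
  have : (U * diagonal hB.eigenvalues * star U) ^ k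
      = U * (diagonal hB.eigenvalues) ^ k * star U := by
    induction k with
    | zero => simpa using hU.symm
    | succ m ih =>
      rw [pow_succ, ih, pow_succ]
      simp only [mul_assoc, key]
  conv_lhs => rw [hspec]
  rw [this, diagonal_pow]
  rfl

private lemma psd_of_eig_pow_le' {B : Matrix (Fin n) (Fin n) ℝ} (hB : B.IsHermitian)
    {k : ℕ} {c : ℝ} (h : ∀ i, (hB.eigenvalues i) ^ k ≤ c) :
    (c • (1 : Matrix (Fin n) (Fin n) ℝ) - B ^ k).PosSemidef := by
  set U : Matrix (Fin n) (Fin n) ℝ := (hB.eigenvectorUnitary : Matrix (Fin n) (Fin n) ℝ)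
  have hU : U * star U = 1 := (Matrix.mem_unitaryGroup_iff).mp hB.eigenvectorUnitary.2
  have hone : c • (1 : Matrix (Fin n) (Fin n) ℝ) = U * (c • 1) * star U := by
    rw [mul_smul_comm, smul_mul_assoc, mul_one, hU]
  have key : c • (1 : Matrix (Fin n) (Fin n) ℝ) - B ^ k
      = U * diagonal (fun i => c - hB.eigenvalues i ^ k) * star U := by
    rw [spectral_decomp' hB k, hone, ← sub_mul, ← mul_sub]
    congr 2
    rw [smul_one_eq_diagonal, diagonal_sub]
  rw [key, star_eq_conjTranspose]
  exact (posSemidef_diagonal_iff.mpr fun i => sub_nonneg.mpr (h i)).mul_mul_conjTranspose_same U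

private lemma psd_pow_of_eig' {B : Matrix (Fin n) (Fin n) ℝ} (hB : B.IsHermitian) {k : ℕ}
    (h : ∀ i, 0 ≤ (hB.eigenvalues i) ^ k) : (B ^ k).PosSemidef := by
  rw [spectral_decomp' hB k, star_eq_conjTranspose]
  exact (posSemidef_diagonal_iff.mpr h).mul_mul_conjTranspose_same _

private lemma psd_sub_smul' {B : Matrix (Fin n) (Fin n) ℝ} (hB : B.IsHermitian) {c : ℝ}
    (h : ∀ i, c ≤ hB.eigenvalues i) :
    (B - c • (1 : Matrix (Fin n) (Fin n) ℝ)).PosSemidef := by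
  set U : Matrix (Fin n) (Fin n) ℝ := (hB.eigenvectorUnitary : Matrix (Fin n) (Fin n) ℝ)
  have hU : U * star U = 1 := (Matrix.mem_unitaryGroup_iff).mp hB.eigenvectorUnitary.2
  have hone : c • (1 : Matrix (Fin n) (Fin n) ℝ) = U * (c • 1) * star U := by
    rw [mul_smul_comm, smul_mul_assoc, mul_one, hU]
  have key : B - c • (1 : Matrix (Fin n) (Fin n) ℝ)
      = U * diagonal (fun i => hB.eigenvalues i - c) * star U := by
    conv_lhs => rw [show B = B ^ 1 by rw [pow_one], spectral_decomp' hB 1]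
    rw [hone, ← sub_mul, ← mul_sub]
    congr 2
    rw [smul_one_eq_diagonal, diagonal_sub]
    simp
  rw [key, star_eq_conjTranspose]
  exact (posSemidef_diagonal_iff.mpr fun i => sub_nonneg.mpr (h i)).mul_mul_conjTranspose_same U

private lemma psd_flip' {M : Matrix (Fin n) (Fin n) ℝ} (hHerm : M.IsHermitian)
    (hoff : ∀ i j, i ≠ j → M i j ≤ 0) {lmin : ℝ}
    (hPSD1 : (M - lmin • (1 : Matrix (Fin n) (Fin n) ℝ)).PosSemidef) :
    ((Matrix.diagonal fun i => M i i) + ((Matrix.diagonal fun i => M i i) - M)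
      - lmin • (1 : Matrix (Fin n) (Fin n) ℝ)).PosSemidef := by
  set D : Matrix (Fin n) (Fin n) ℝ := Matrix.diagonal fun i => M i i with hD
  have hermD : D.IsHermitian := isHermitian_diagonal _
  refine PosSemidef.of_dotProduct_mulVec_nonneg ?_ ?_
  · exact ((hermD.add (hermD.sub hHerm)).sub
      (by rw [smul_one_eq_diagonal]; exact isHermitian_diagonal _))
  · intro x
    set y : Fin n → ℝ := fun i => |x i| with hy
    have hq := hPSD1.dotProduct_mulVec_nonneg y
    rw [star_trivial] at hq ⊢
    rw [sub_mulVec, dotProduct_sub, smul_mulVec, one_mulVec, dotProduct_smul] at hq ⊢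
    have hxy : x ⬝ᵥ x = y ⬝ᵥ y := by
      simp only [dotProduct, hy]
      exact Finset.sum_congr rfl fun i _ => (abs_mul_abs_self (x i)).symm
    have key : y ⬝ᵥ (M *ᵥ y) ≤ x ⬝ᵥ ((D + (D - M)) *ᵥ x) := by
      simp only [dotProduct, mulVec, Finset.mul_sum]
      apply Finset.sum_le_sum
      intro i _
      apply Finset.sum_le_sum
      intro j _
      by_cases hij : i = j
      · subst hij
        have hDii : D i i = M i i := Matrix.diagonal_apply_eq _ i
        simp only [Matrix.add_apply, Matrix.sub_apply, hDii, hy]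
        apply le_of_eq
        linear_combination (M i i) * (abs_mul_abs_self (x i))
      · have h1 : D i j = 0 := Matrix.diagonal_apply_ne _ hij
        have h2 : M i j ≤ 0 := hoff i j hij
        simp only [Matrix.add_apply, Matrix.sub_apply, h1, zero_add, zero_sub, hy]
        nlinarith [neg_abs_le (x i * x j), abs_mul (x i) (x j)]
    have hxx : lmin • (x ⬝ᵥ x) = lmin • (y ⬝ᵥ y) := by rw [hxy]
    simp only [smul_eq_mul] at *
    linarith

private lemma w_pow' : ((2:ℝ) ^ ((1:ℝ)/3)) ^ (3:ℕ) = 2 := by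
  rw [← Real.rpow_natCast ((2:ℝ) ^ ((1:ℝ)/3)) 3, ← Real.rpow_mul (by norm_num)]
  norm_num

private lemma w_gt_one' : 1 < (2:ℝ) ^ ((1:ℝ)/3) :=
  Real.one_lt_rpow_iff_of_pos (by norm_num) |>.mpr (Or.inl ⟨by norm_num, by norm_num⟩)

private lemma w_le' : (2:ℝ) ^ ((1:ℝ)/3) ≤ 4/3 := by
  have h := w_pow'
  nlinarith [w_gt_one', sq_nonneg ((2:ℝ) ^ ((1:ℝ)/3) - 4/3), sq_nonneg ((2:ℝ) ^ ((1:ℝ)/3))]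

private lemma c_gt_one' : 1 < Real.log ((2:ℝ) ^ ((1:ℝ)/3) / ((2:ℝ) ^ ((1:ℝ)/3) - 1)) := by
  have h1 : 1 < (2:ℝ) ^ ((1:ℝ)/3) := w_gt_one'
  have h4 : (4:ℝ) ≤ (2:ℝ) ^ ((1:ℝ)/3) / ((2:ℝ) ^ ((1:ℝ)/3) - 1) := by
    rw [le_div_iff₀ (by linarith)]
    nlinarith [w_le']
  calc (1:ℝ) < Real.log 4 := by
        rw [show (4:ℝ) = 2^(2:ℕ) by norm_num, Real.log_pow]
        have := Real.log_two_gt_d9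
        push_cast
        linarith
    _ ≤ _ := Real.log_le_log (by norm_num) h4

end Aux

set_option maxHeartbeats 2000000 in
/-- For the standard splitting `M₀ = D₀ − A₀` of an SDDM matrix with condition number `κ`,
taking `d = ⌈log₂(2 ln(2^{1/3}/(2^{1/3} − 1)) κ)⌉`, there exists `ε_d < (1/3) ln 2` with
`D₀ ≈_{ε_d} D₀ − D₀ (D₀⁻¹ A₀)^(2^d)`. -/
theorem chain_length_bound {n : ℕ}
    {M : Matrix (Fin n) (Fin n) ℝ} (hM : IsSDDM M) (hHerm : M.IsHermitian)
    {lmax lmin κ : ℝ}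
    (hmax : IsGreatest (Set.range hHerm.eigenvalues) lmax)
    (hmin : IsLeast (Set.range hHerm.eigenvalues) lmin)
    (hκ : κ = lmax / lmin)
    {d : ℕ}
    (hd : d = ⌈Real.logb 2
      (2 * Real.log ((2 : ℝ) ^ ((1 : ℝ) / 3) / ((2 : ℝ) ^ ((1 : ℝ) / 3) - 1)) * κ)⌉₊) :
    ∃ εd : ℝ, 0 ≤ εd ∧ εd < Real.log 2 / 3 ∧
      MApprox εd (Matrix.diagonal fun i => M i i)
        (Matrix.diagonal (fun i => M i i) -
          Matrix.diagonal (fun i => M i i) *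
            ((Matrix.diagonal fun i => M i i)⁻¹ *
              (Matrix.diagonal (fun i => M i i) - M)) ^ (2 ^ d)) := by
  classical
  obtain ⟨hPD, hoff, _hdom⟩ := hM
  -- eigenvalue facts
  have heig_lo : ∀ i, lmin ≤ hHerm.eigenvalues i := fun i => hmin.2 ⟨i, rfl⟩
  have heig_hi : ∀ i, hHerm.eigenvalues i ≤ lmax := fun i => hmax.2 ⟨i, rfl⟩
  have hlmin_pos : 0 < lmin := by
    obtain ⟨i, hi⟩ := hmin.1
    rw [← hi]; exact hPD.eigenvalues_pos i
  have hlm : lmin ≤ lmax := by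
    obtain ⟨i, hi⟩ := hmin.1
    rw [← hi]; exact heig_hi i
  have hlmax_pos : 0 < lmax := lt_of_lt_of_le hlmin_pos hlm
  have hPSD1 : (M - lmin • (1 : Matrix (Fin n) (Fin n) ℝ)).PosSemidef :=
    psd_sub_smul' hHerm heig_lo
  have hPSD1' : (lmax • (1 : Matrix (Fin n) (Fin n) ℝ) - M ^ 1).PosSemidef :=
    psd_of_eig_pow_le' hHerm (k := 1) (c := lmax) (fun i => by simpa using heig_hi i)
  rw [pow_one] at hPSD1'
  set dg : Fin n → ℝ := fun i => M i i with hdg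
  set D : Matrix (Fin n) (Fin n) ℝ := Matrix.diagonal dg with hDdef
  -- diagonal entry bounds
  have hquad : ∀ (X : Matrix (Fin n) (Fin n) ℝ) (i : Fin n),
      (Pi.single i 1 : Fin n → ℝ) ⬝ᵥ (X *ᵥ Pi.single i 1) = X i i := by
    intro X i
    simp [Matrix.mulVec_single, dotProduct, Pi.single_apply]
  have hdlo : ∀ i, lmin ≤ dg i := by
    intro i
    have h2 := hPSD1.dotProduct_mulVec_nonneg (Pi.single i 1)
    have hstar : star (Pi.single i 1 : Fin n → ℝ) = Pi.single i 1 := by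
      funext j; simp [Pi.star_apply, Pi.single_apply, apply_ite]
    have hpp : (Pi.single i 1 : Fin n → ℝ) ⬝ᵥ Pi.single i 1 = 1 := by
      simp [dotProduct, Pi.single_apply]
    rw [hstar, sub_mulVec, dotProduct_sub, smul_mulVec, one_mulVec,
      dotProduct_smul, hquad M i, hpp] at h2
    simp only [smul_eq_mul, mul_one] at h2
    linarith
  have hdhi : ∀ i, dg i ≤ lmax := by
    intro i
    have h2 := hPSD1'.dotProduct_mulVec_nonneg (Pi.single i 1)
    have hstar : star (Pi.single i 1 : Fin n → ℝ) = Pi.single i 1 := by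
      funext j; simp [Pi.star_apply, Pi.single_apply, apply_ite]
    have hpp : (Pi.single i 1 : Fin n → ℝ) ⬝ᵥ Pi.single i 1 = 1 := by
      simp [dotProduct, Pi.single_apply]
    rw [hstar, sub_mulVec, dotProduct_sub, smul_mulVec, one_mulVec,
      dotProduct_smul, hquad M i, hpp] at h2
    simp only [smul_eq_mul, mul_one] at h2
    linarith
  have hd_pos : ∀ i, 0 < dg i := fun i => lt_of_lt_of_le hlmin_pos (hdlo i)
  -- square root scaling matrices
  set r : Fin n → ℝ := fun i => Real.sqrt (dg i) with hrdef
  set cc : Fin n → ℝ := fun i => (Real.sqrt (dg i))⁻¹ with hccdef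
  have hr_pos : ∀ i, 0 < r i := fun i => Real.sqrt_pos.mpr (hd_pos i)
  have hrr : ∀ i, r i * r i = dg i := fun i => Real.mul_self_sqrt (hd_pos i).le
  set R : Matrix (Fin n) (Fin n) ℝ := Matrix.diagonal r with hRdef
  set C : Matrix (Fin n) (Fin n) ℝ := Matrix.diagonal cc with hCdef
  have hRC : R * C = 1 := by
    rw [hRdef, hCdef, diagonal_mul_diagonal,
      show (fun i => r i * cc i) = fun _ => (1:ℝ) from
        funext fun i => mul_inv_cancel₀ (hr_pos i).ne', ← diagonal_one]
  have hCR : C * R = 1 := by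
    rw [hRdef, hCdef, diagonal_mul_diagonal,
      show (fun i => cc i * r i) = fun _ => (1:ℝ) from
        funext fun i => inv_mul_cancel₀ (hr_pos i).ne', ← diagonal_one]
  have hRR : R * R = D := by
    rw [hRdef, hDdef, diagonal_mul_diagonal]
    exact congrArg _ (funext hrr)
  have hDC : D * C = R := by
    rw [hRdef, hCdef, hDdef, diagonal_mul_diagonal]
    refine congrArg _ (funext fun i => ?_)
    have hcr : cc i = (r i)⁻¹ := rfl
    rw [← hrr i, hcr]
    field_simp
  have hCD : C * D = R := by
    rw [hRdef, hCdef, hDdef, diagonal_mul_diagonal]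
    refine congrArg _ (funext fun i => ?_)
    have hcr : cc i = (r i)⁻¹ := rfl
    rw [← hrr i, hcr]
    field_simp
  have hDinv : D⁻¹ = C * C := by
    refine Matrix.inv_eq_right_inv ?_
    rw [← mul_assoc, hDC, hRC]
  have hermC : Cᴴ = C := by
    rw [hCdef, diagonal_conjTranspose]
    congr
  have hermR : Rᴴ = R := by
    rw [hRdef, diagonal_conjTranspose]
    congr
  -- the normalized matrix B
  set A : Matrix (Fin n) (Fin n) ℝ := D - M with hAdef
  set B : Matrix (Fin n) (Fin n) ℝ := C * A * C with hBdef
  have hermA : A.IsHermitian := (isHermitian_diagonal _).sub hHerm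
  have hB : B.IsHermitian := by
    have := isHermitian_mul_mul_conjTranspose C hermA
    rwa [hermC] at this
  have hCDC : C * D * C = 1 := by rw [hCD, hRC]
  have hB1 : B = 1 - C * M * C := by
    rw [hBdef, hAdef, mul_sub, sub_mul, hCDC]
  -- PSD bounds on B
  set s : ℝ := 1 - lmin / lmax with hsdef
  have hdiagkey : lmin • (C * C) - (lmin/lmax) • (1 : Matrix (Fin n) (Fin n) ℝ)
      = Matrix.diagonal (fun i => lmin * (cc i * cc i) - lmin/lmax) := by
    rw [hCdef, diagonal_mul_diagonal, smul_one_eq_diagonal, ← diagonal_smul, ← diagonal_sub]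
    rfl
  have hdiag_nonneg : ∀ i, 0 ≤ lmin * (cc i * cc i) - lmin/lmax := by
    intro i
    have h1 : cc i * cc i = (dg i)⁻¹ := by
      rw [hccdef, ← mul_inv, hrr i]
    rw [h1]
    have h2 : lmin / lmax ≤ lmin / dg i :=
      div_le_div_of_nonneg_left hlmin_pos.le (hd_pos i) (hdhi i)
    rw [div_eq_mul_inv lmin (dg i)] at h2
    linarith
  have hCsub : C * (M - lmin • (1 : Matrix (Fin n) (Fin n) ℝ)) * C
      = C * M * C - lmin • (C * C) := by
    rw [mul_sub, sub_mul, mul_smul_comm, smul_mul_assoc, mul_one]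
  have hPSD3 : (s • (1 : Matrix (Fin n) (Fin n) ℝ) - B).PosSemidef := by
    have e1 : s • (1 : Matrix (Fin n) (Fin n) ℝ) - B
        = C * (M - lmin • (1 : Matrix (Fin n) (Fin n) ℝ)) * C
          + (lmin • (C * C) - (lmin/lmax) • (1 : Matrix (Fin n) (Fin n) ℝ)) := by
      rw [hB1, hCsub, hsdef, sub_smul, one_smul]
      abel
    rw [e1, hdiagkey]
    refine PosSemidef.add ?_ (posSemidef_diagonal_iff.mpr hdiag_nonneg)
    have := hPSD1.mul_mul_conjTranspose_same C
    rwa [hermC] at this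
  have hPSD4 : (s • (1 : Matrix (Fin n) (Fin n) ℝ) + B).PosSemidef := by
    have hN := psd_flip' hHerm hoff hPSD1
    have hN' : (C * ((D + A) - lmin • (1 : Matrix (Fin n) (Fin n) ℝ)) * C).PosSemidef := by
      have := hN.mul_mul_conjTranspose_same C
      rwa [hermC] at this
    have e2 : s • (1 : Matrix (Fin n) (Fin n) ℝ) + B
        = C * ((D + A) - lmin • (1 : Matrix (Fin n) (Fin n) ℝ)) * C
          + (lmin • (C * C) - (lmin/lmax) • (1 : Matrix (Fin n) (Fin n) ℝ)) := by
      have hexpand : C * ((D + A) - lmin • (1 : Matrix (Fin n) (Fin n) ℝ)) * C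
          = (1 + B) - lmin • (C * C) := by
        rw [mul_sub, sub_mul, mul_add, add_mul, hCDC, mul_smul_comm, mul_one, smul_mul_assoc,
          ← hBdef]
      rw [hexpand, hsdef, sub_smul, one_smul]
      abel
    rw [e2, hdiagkey]
    exact PosSemidef.add hN' (posSemidef_diagonal_iff.mpr hdiag_nonneg)
  have hμ_hi : ∀ i, hB.eigenvalues i ≤ s := eig_le_of_psd' hB hPSD3
  have hμ_lo : ∀ i, -s ≤ hB.eigenvalues i := neg_le_eig_of_psd' hB hPSD4
  have hs_nonneg : 0 ≤ s := by
    rw [hsdef]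
    have : lmin / lmax ≤ 1 := div_le_one_of_le₀ hlm hlmax_pos.le
    linarith
  -- scalar estimates
  set w : ℝ := (2:ℝ) ^ ((1:ℝ)/3) with hwdef
  set c : ℝ := Real.log (w / (w - 1)) with hcdef
  have hw1 : 1 < w := w_gt_one'
  have hc1 : 1 < c := c_gt_one'
  have hκpos : 0 < κ := by rw [hκ]; positivity
  have hκ1 : 1 ≤ κ := by
    rw [hκ]
    exact (one_le_div hlmin_pos).mpr hlm
  have harg_pos : (0:ℝ) < 2 * c * κ := by positivity
  have hdlog : Real.logb 2 (2 * c * κ) ≤ (d : ℝ) := by rw [hd]; exact Nat.le_ceil _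
  set k : ℕ := 2 ^ d with hkdef
  have hk2 : 2 * c * κ ≤ (k : ℝ) := by
    have h1 : (2:ℝ) ^ Real.logb 2 (2*c*κ) = 2*c*κ :=
      Real.rpow_logb (by norm_num) (by norm_num) harg_pos
    have h2 : (2:ℝ) ^ Real.logb 2 (2*c*κ) ≤ (2:ℝ) ^ ((d:ℕ):ℝ) :=
      (Real.rpow_le_rpow_left_iff one_lt_two).mpr hdlog
    rw [h1, Real.rpow_natCast] at h2
    rw [hkdef]
    push_cast
    exact h2
  have hd_pos' : 0 < d := by
    rw [hd]
    refine Nat.ceil_pos.mpr (Real.logb_pos (by norm_num) (by nlinarith))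
  have hkeven : Even k := (Nat.even_pow).mpr ⟨even_two, hd_pos'.ne'⟩
  -- s ^ k ≤ t
  set t : ℝ := ((w - 1) / w) ^ 2 with htdef
  have hq_pos : 0 < (w - 1) / w := div_pos (by linarith) (by linarith)
  have hq_lt1 : (w - 1) / w < 1 := (div_lt_one (by linarith)).mpr (by linarith)
  have ht_nonneg : 0 ≤ t := sq_nonneg _
  have ht_lt : t < (w - 1) / w := by
    rw [htdef]
    nlinarith
  have ht1 : t < 1 := lt_trans ht_lt hq_lt1
  have hexp_c : Real.exp (-c) = (w - 1) / w := by
    rw [hcdef, ← Real.log_inv,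
      Real.exp_log (inv_pos.mpr (div_pos (by linarith) (by linarith))), inv_div]
  have ht_exp : Real.exp (-(2 * c)) = t := by
    rw [show -(2*c) = (-c) + (-c) by ring, Real.exp_add, hexp_c, htdef, sq]
  have hsk_le : s ^ k ≤ t := by
    have ha : s ≤ Real.exp (-(lmin/lmax)) := by
      have := Real.add_one_le_exp (-(lmin/lmax))
      rw [hsdef]; linarith
    have h1 : s ^ k ≤ Real.exp (-(lmin/lmax)) ^ k := pow_le_pow_left₀ hs_nonneg ha k
    have h2 : Real.exp (-(lmin/lmax)) ^ k = Real.exp ((k:ℝ) * (-(lmin/lmax))) :=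
      (Real.exp_nat_mul _ k).symm
    have h3 : 2 * c ≤ (k:ℝ) * (lmin/lmax) := by
      have hmul := mul_le_mul_of_nonneg_right hk2 (div_pos hlmin_pos hlmax_pos).le
      have heq : 2 * c * κ * (lmin/lmax) = 2 * c := by
        rw [hκ]; field_simp
      rw [heq] at hmul
      exact hmul
    have h4 : Real.exp ((k:ℝ) * (-(lmin/lmax))) ≤ Real.exp (-(2*c)) := by
      apply Real.exp_le_exp.mpr
      rw [mul_neg]
      linarith
    calc s ^ k ≤ _ := h1
      _ = _ := h2
      _ ≤ _ := h4
      _ = t := ht_exp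
  -- the approximation constant
  set εd : ℝ := -Real.log (1 - t) with hεdef
  have h1t_pos : (0:ℝ) < 1 - t := by linarith
  have hexp_neg : Real.exp (-εd) = 1 - t := by
    rw [hεdef, neg_neg, Real.exp_log h1t_pos]
  have hεd_nonneg : 0 ≤ εd := by
    rw [hεdef]
    have := Real.log_nonpos (by linarith) (by linarith : 1 - t ≤ 1)
    linarith
  have hεd_lt : εd < Real.log 2 / 3 := by
    have hwinv : Real.log (w⁻¹) = -(Real.log 2 / 3) := by
      rw [Real.log_inv, hwdef, Real.log_rpow (by norm_num)]
      ring
    have hwi_pos : (0:ℝ) < w⁻¹ := by positivity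
    have hlt : w⁻¹ < 1 - t := by
      have hwne : w ≠ 0 := by linarith
      have h5 : (1:ℝ) - (w-1)/w = w⁻¹ := by field_simp; ring
      linarith
    have hll := Real.log_lt_log hwi_pos hlt
    rw [hwinv] at hll
    rw [hεdef]
    linarith
  -- eigenvalue power bounds
  have hμk_le : ∀ i, hB.eigenvalues i ^ k ≤ t := by
    intro i
    have habs : |hB.eigenvalues i| ≤ s := abs_le.mpr ⟨hμ_lo i, hμ_hi i⟩
    calc hB.eigenvalues i ^ k = |hB.eigenvalues i| ^ k := (hkeven.pow_abs _).symm
      _ ≤ s ^ k := pow_le_pow_left₀ (abs_nonneg _) habs k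
      _ ≤ t := hsk_le
  have hμk_nonneg : ∀ i, 0 ≤ hB.eigenvalues i ^ k := fun i =>
    hkeven.pow_nonneg _
  -- the key matrix identity
  have hDinvA_pow : D * (D⁻¹ * A) ^ k = R * B ^ k * R := by
    have h1 : D⁻¹ * A = C * B * R := by
      rw [hDinv, hBdef]
      simp only [mul_assoc, hCR, mul_one]
    have h2 : (C * B * R) ^ k = C * B ^ k * R := conj_pow' hCR hRC k (by rw [hkdef]; positivity)
    rw [h1, h2, ← mul_assoc, ← mul_assoc, hDC]
  have hPk : (B ^ k).PosSemidef := psd_pow_of_eig' hB hμk_nonneg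
  have hRBkR : (R * B ^ k * R).PosSemidef := by
    have := hPk.mul_mul_conjTranspose_same R
    rwa [hermR] at this
  have htB : (t • (1 : Matrix (Fin n) (Fin n) ℝ) - B ^ k).PosSemidef :=
    psd_of_eig_pow_le' hB hμk_le
  have hRtBR : (R * (t • (1 : Matrix (Fin n) (Fin n) ℝ) - B ^ k) * R).PosSemidef := by
    have := htB.mul_mul_conjTranspose_same R
    rwa [hermR] at this
  have hDpsd : D.PosSemidef := by
    rw [hDdef]
    exact posSemidef_diagonal_iff.mpr fun i => (hd_pos i).le
  refine ⟨εd, hεd_nonneg, hεd_lt, ?_, ?_⟩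
  · -- lower bound
    show (D - D * (D⁻¹ * A) ^ k - Real.exp (-εd) • D).PosSemidef
    have e : D - D * (D⁻¹ * A) ^ k - Real.exp (-εd) • D
        = R * (t • (1 : Matrix (Fin n) (Fin n) ℝ) - B ^ k) * R := by
      rw [hexp_neg, hDinvA_pow, mul_sub, sub_mul, mul_smul_comm, smul_mul_assoc, mul_one,
        hRR, sub_smul, one_smul]
      abel
    rw [e]
    exact hRtBR
  · -- upper bound
    show (Real.exp εd • D - (D - D * (D⁻¹ * A) ^ k)).PosSemidef
    have e : Real.exp εd • D - (D - D * (D⁻¹ * A) ^ k)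
        = (Real.exp εd - 1) • D + R * B ^ k * R := by
      rw [hDinvA_pow, sub_smul, one_smul]
      abel
    rw [e]
    refine PosSemidef.add ?_ hRBkR
    rw [hDdef, ← diagonal_smul]
    refine posSemidef_diagonal_iff.mpr fun i => ?_
    have h1 : (1:ℝ) ≤ Real.exp εd := Real.one_le_exp hεd_nonneg
    have := (hd_pos i).le
    simp only [Pi.smul_apply, smul_eq_mul]
    nlinarith
end

section
/- Let A be a real n×E matrix, let L = AAᵀ, and let D be a diagonal E×E matrix. Then for every v ∈ ℝⁿ, ‖A D Aᵀ v‖_L ≤ μ_n(L) · (max_e |D_ee|) · ‖v‖_L, where μ_n(L) is the largest eigenvalue of L and ‖u‖_L = √(uᵀLu). -/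
open Matrix

/-- The Laplacian seminorm `‖v‖_L = √(vᵀ L v)` induced by a PSD matrix `L`. -/
noncomputable def lnorm {n : ℕ} (L : Matrix (Fin n) (Fin n) ℝ) (v : Fin n → ℝ) : ℝ :=
  Real.sqrt (v ⬝ᵥ L.mulVec v)

/-- Euclidean norm as a square root of a dot product. -/
noncomputable def _root_.enorm {m : ℕ} (x : Fin m → ℝ) : ℝ := Real.sqrt (x ⬝ᵥ x)

lemma dot_self_nonneg {m : ℕ} (x : Fin m → ℝ) : 0 ≤ x ⬝ᵥ x := by
  unfold dotProduct
  exact Finset.sum_nonneg fun i _ => mul_self_nonneg _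

lemma enorm_nonneg' {m : ℕ} (x : Fin m → ℝ) : 0 ≤ _root_.enorm x := Real.sqrt_nonneg _

lemma enorm_sq {m : ℕ} (x : Fin m → ℝ) : _root_.enorm x ^ 2 = x ⬝ᵥ x := by
  rw [_root_.enorm, Real.sq_sqrt (dot_self_nonneg x)]

lemma dot_le_enorm_mul_enorm {m : ℕ} (x y : Fin m → ℝ) :
    x ⬝ᵥ y ≤ _root_.enorm x * _root_.enorm y := by
  have h := Finset.sum_mul_sq_le_sq_mul_sq Finset.univ x y
  have h2 : (x ⬝ᵥ y) ^ 2 ≤ (_root_.enorm x * _root_.enorm y) ^ 2 := by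
    rw [mul_pow, enorm_sq, enorm_sq]
    simpa [dotProduct, pow_two] using h
  have hnn : 0 ≤ _root_.enorm x * _root_.enorm y := mul_nonneg (enorm_nonneg' _) (enorm_nonneg' _)
  calc x ⬝ᵥ y ≤ |x ⬝ᵥ y| := le_abs_self _
    _ = Real.sqrt ((x ⬝ᵥ y) ^ 2) := (Real.sqrt_sq_eq_abs _).symm
    _ ≤ Real.sqrt ((_root_.enorm x * _root_.enorm y) ^ 2) := Real.sqrt_le_sqrt h2
    _ = _root_.enorm x * _root_.enorm y := Real.sqrt_sq hnn

/-- Quadratic form bound: `xᵀ L x ≤ μ ‖x‖²` when all eigenvalues of `L` are `≤ μ`. -/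
lemma quad_form_le {m : ℕ} {L : Matrix (Fin m) (Fin m) ℝ} (hL : L.IsHermitian) {μ : ℝ}
    (hμ : ∀ i, hL.eigenvalues i ≤ μ) (x : Fin m → ℝ) :
    x ⬝ᵥ L.mulVec x ≤ μ * (x ⬝ᵥ x) := by
  classical
  set U : Matrix (Fin m) (Fin m) ℝ := (hL.eigenvectorUnitary : Matrix (Fin m) (Fin m) ℝ) with hU
  have hUU : U * star U = 1 := (Matrix.mem_unitaryGroup_iff).mp hL.eigenvectorUnitary.2
  set y : Fin m → ℝ := x ᵥ* U with hy
  have hyx : star U *ᵥ x = y := by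
    rw [Matrix.star_eq_conjTranspose, Matrix.conjTranspose_eq_transpose_of_trivial,
      Matrix.mulVec_transpose, hy]
  have hquad : x ⬝ᵥ L.mulVec x = ∑ i, hL.eigenvalues i * y i ^ 2 := by
    conv_lhs => rw [hL.spectral_theorem, Unitary.conjStarAlgAut_apply, ← hU]
    rw [← Matrix.mulVec_mulVec, ← Matrix.mulVec_mulVec, hyx,
      Matrix.dotProduct_mulVec x U, ← hy, dotProduct]
    congr 1
    ext i
    rw [Matrix.mulVec_diagonal]
    simp [pow_two]
    ring
  have hnorm : x ⬝ᵥ x = ∑ i, y i ^ 2 := by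
    have : (∑ i, y i ^ 2) = y ⬝ᵥ y := by simp [dotProduct, pow_two]
    rw [this, hy, ← Matrix.mulVec_transpose, ← Matrix.conjTranspose_eq_transpose_of_trivial,
      ← Matrix.star_eq_conjTranspose]
    rw [Matrix.dotProduct_mulVec, ← Matrix.mulVec_transpose,
      ← Matrix.conjTranspose_eq_transpose_of_trivial (star U), ← Matrix.star_eq_conjTranspose,
      star_star, Matrix.mulVec_mulVec, hUU, Matrix.one_mulVec]
  rw [hquad, hnorm, Finset.mul_sum]
  exact Finset.sum_le_sum fun i _ =>
    mul_le_mul_of_nonneg_right (hμ i) (sq_nonneg _)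

/-- For `L = AAᵀ` and diagonal `D`, every `v` satisfies
`‖A D Aᵀ v‖_L ≤ μ_n(L) · (max_e |D_ee|) · ‖v‖_L`, where `μ_n(L)` is the largest
eigenvalue of `L`. -/
theorem weighted_gram_seminorm_bound {n E : ℕ} [NeZero n] [NeZero E]
    (A : Matrix (Fin n) (Fin E) ℝ) (d : Fin E → ℝ)
    (hL : (A * Aᵀ).IsHermitian)
    (μn : ℝ) (hμ : IsGreatest (Set.range hL.eigenvalues) μn)
    (v : Fin n → ℝ) :
    lnorm (A * Aᵀ) ((A * Matrix.diagonal d * Aᵀ).mulVec v)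
      ≤ μn * (Finset.univ.sup' Finset.univ_nonempty fun e : Fin E => |d e|) *
          lnorm (A * Aᵀ) v := by
  classical
  set M : ℝ := Finset.univ.sup' Finset.univ_nonempty fun e : Fin E => |d e| with hM
  have hMnonneg : 0 ≤ M := by
    obtain ⟨e⟩ := Finset.univ_nonempty (α := Fin E)
    exact (abs_nonneg (d e)).trans (Finset.le_sup' (fun e : Fin E => |d e|) (Finset.mem_univ e))
  have hdM : ∀ e, |d e| ≤ M := fun e =>
    Finset.le_sup' (fun e : Fin E => |d e|) (Finset.mem_univ e)
  -- μn is nonnegative since A Aᵀ is PSD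
  have hpsd : (A * Aᵀ).PosSemidef := by
    have := Matrix.posSemidef_self_mul_conjTranspose A
    rwa [Matrix.conjTranspose_eq_transpose_of_trivial] at this
  have hμnonneg : 0 ≤ μn := by
    obtain ⟨i, hi⟩ := hμ.1
    exact hi ▸ hpsd.eigenvalues_nonneg i
  have hμall : ∀ i, hL.eigenvalues i ≤ μn := fun i => hμ.2 ⟨i, rfl⟩
  -- basic identity: `u ⬝ᵥ (A Aᵀ) u = ‖Aᵀ u‖²`
  have key : ∀ u : Fin n → ℝ, u ⬝ᵥ (A * Aᵀ).mulVec u = (Aᵀ *ᵥ u) ⬝ᵥ (Aᵀ *ᵥ u) := by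
    intro u
    rw [← Matrix.mulVec_mulVec, Matrix.dotProduct_mulVec, ← Matrix.mulVec_transpose]
  have lnorm_eq : ∀ u : Fin n → ℝ, lnorm (A * Aᵀ) u = _root_.enorm (Aᵀ *ᵥ u) := by
    intro u
    rw [lnorm, key, _root_.enorm]
  set w : Fin E → ℝ := Aᵀ *ᵥ v with hw
  set z : Fin E → ℝ := Aᵀ *ᵥ ((A * Matrix.diagonal d * Aᵀ) *ᵥ v) with hz
  have hz' : z = (Aᵀ * A) *ᵥ (Matrix.diagonal d *ᵥ w) := by
    rw [hz, hw, Matrix.mulVec_mulVec, Matrix.mulVec_mulVec, Matrix.mulVec_mulVec,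
      ← Matrix.mul_assoc, ← Matrix.mul_assoc]
  -- diagonal bound: ‖D w‖ ≤ M ‖w‖
  have hdiag : _root_.enorm (Matrix.diagonal d *ᵥ w) ≤ M * _root_.enorm w := by
    have h1 : (Matrix.diagonal d *ᵥ w) ⬝ᵥ (Matrix.diagonal d *ᵥ w) ≤ M ^ 2 * (w ⬝ᵥ w) := by
      simp only [dotProduct, Matrix.mulVec_diagonal, Finset.mul_sum]
      apply Finset.sum_le_sum
      intro e _
      have : d e * w e * (d e * w e) = (d e) ^ 2 * (w e * w e) := by ring
      rw [this]
      have h2 : (d e) ^ 2 ≤ M ^ 2 := by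
        rw [← sq_abs]
        exact pow_le_pow_left₀ (abs_nonneg _) (hdM e) 2
      exact mul_le_mul_of_nonneg_right h2 (mul_self_nonneg _)
    rw [_root_.enorm]
    calc Real.sqrt ((Matrix.diagonal d *ᵥ w) ⬝ᵥ (Matrix.diagonal d *ᵥ w))
        ≤ Real.sqrt (M ^ 2 * (w ⬝ᵥ w)) := Real.sqrt_le_sqrt h1
      _ = M * _root_.enorm w := by
          rw [Real.sqrt_mul (sq_nonneg M), Real.sqrt_sq hMnonneg, _root_.enorm]
  -- operator bound: ‖(Aᵀ A) y‖ ≤ μn ‖y‖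
  have hop : ∀ y : Fin E → ℝ, _root_.enorm ((Aᵀ * A) *ᵥ y) ≤ μn * _root_.enorm y := by
    intro y
    set p : Fin n → ℝ := A *ᵥ y with hp
    set q : Fin E → ℝ := (Aᵀ * A) *ᵥ y with hq
    have hq' : q = Aᵀ *ᵥ p := by rw [hq, hp, Matrix.mulVec_mulVec]
    have h1 : q ⬝ᵥ q ≤ μn * (p ⬝ᵥ p) := by
      have hqe : q ⬝ᵥ q = p ⬝ᵥ (A * Aᵀ).mulVec p := by rw [hq']; exact (key p).symm
      rw [hqe]
      exact quad_form_le hL hμall p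
    have h2 : y ⬝ᵥ q = p ⬝ᵥ p := by
      rw [hq', Matrix.dotProduct_mulVec y Aᵀ p, ← Matrix.mulVec_transpose Aᵀ y,
        Matrix.transpose_transpose, hp]
    have h3 : q ⬝ᵥ q ≤ μn * (_root_.enorm y * _root_.enorm q) := by
      calc q ⬝ᵥ q ≤ μn * (p ⬝ᵥ p) := h1
        _ = μn * (y ⬝ᵥ q) := by rw [h2]
        _ ≤ μn * (_root_.enorm y * _root_.enorm q) :=
            mul_le_mul_of_nonneg_left (dot_le_enorm_mul_enorm y q) hμnonneg
    rcases eq_or_lt_of_le (enorm_nonneg' q) with h0 | h0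
    · rw [← h0]; exact mul_nonneg hμnonneg (enorm_nonneg' _)
    · have h4 : _root_.enorm q * _root_.enorm q ≤ μn * _root_.enorm y * _root_.enorm q := by
        have he := enorm_sq q
        nlinarith [h3]
      exact le_of_mul_le_mul_right h4 h0
  -- put everything together
  rw [lnorm_eq, lnorm_eq, ← hw, ← hz, hz']
  calc _root_.enorm ((Aᵀ * A) *ᵥ (Matrix.diagonal d *ᵥ w))
      ≤ μn * _root_.enorm (Matrix.diagonal d *ᵥ w) := hop _
    _ ≤ μn * (M * _root_.enorm w) := mul_le_mul_of_nonneg_left hdiag hμnonneg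
    _ = μn * M * _root_.enorm w := by ring
end
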